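/- arXiv:2411.09941 — 2 statements merged into one kernel-verified Lean document; each statement's English description precedes it below -/
import Mathlib

section
/- Let u be a classical solution in C²(ℝⁿ) of −Δu + (−Δ)^s u + u = u^p in ℝⁿ with u ≥ 0 and u(x) → 0 as |x| → ∞. If u is nontrivial, then u > 0 everywhere in ℝⁿ. -/
open MeasureTheory Filter Set
open scoped Topology

noncomputable section

/-- The classical Laplacian of `u` at `x`, as the trace of the second derivative. -/
def lapl (n : ℕ) (u : EuclideanSpace ℝ (Fin n) → ℝ) (x : EuclideanSpace ℝ (Fin n)) : ℝ :=
  ∑ i : Fin n,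
    fderiv ℝ (fun y => fderiv ℝ u y (EuclideanSpace.single i 1)) x (EuclideanSpace.single i 1)

/-- `L` is the value at `x` of the (un-normalized) fractional Laplacian of `u`, defined as the
principal value `P.V. ∫ (u(x) − u(y)) / |x − y|^{n+2s} dy`. -/
def IsFracLapAt (n : ℕ) (s : ℝ) (u : EuclideanSpace ℝ (Fin n) → ℝ)
    (x : EuclideanSpace ℝ (Fin n)) (L : ℝ) : Prop :=
  Filter.Tendsto
    (fun ε : ℝ => ∫ y in {y : EuclideanSpace ℝ (Fin n) | ε ≤ dist x y},
      (u x - u y) / dist x y ^ ((n : ℝ) + 2 * s))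
    (nhdsWithin 0 (Set.Ioi 0)) (nhds L)

/-- 1-D second derivative test at a global minimum. -/
lemma second_deriv_test {g g' : ℝ → ℝ} {A : ℝ}
    (hg : ∀ t, HasDerivAt g (g' t) t)
    (hg' : HasDerivAt g' A 0)
    (hmin : ∀ t, g 0 ≤ g t) : 0 ≤ A := by
  by_contra hA
  push_neg at hA
  have h0 : g' 0 = 0 :=
    IsLocalMin.hasDerivAt_eq_zero (Filter.Eventually.of_forall hmin) (hg 0)
  have hslope : Tendsto (slope g' 0) (𝓝[≠] 0) (𝓝 A) :=
    hasDerivAt_iff_tendsto_slope.1 hg'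
  have hev : ∀ᶠ t in 𝓝[≠] (0:ℝ), slope g' 0 t < 0 :=
    hslope.eventually (eventually_lt_nhds hA)
  have hev2 : ∀ᶠ t in 𝓝[>] (0:ℝ), slope g' 0 t < 0 :=
    hev.filter_mono (nhdsWithin_mono 0 (fun t ht => ne_of_gt ht))
  obtain ⟨δ, hδpos, hδs⟩ := Metric.eventually_nhds_iff.1 (eventually_nhdsWithin_iff.1 hev2)
  have hneg : ∀ t ∈ Ioo (0:ℝ) δ, g' t < 0 := by
    intro t ht
    have hd : dist t 0 < δ := by
      rw [Real.dist_eq, sub_zero, abs_of_pos ht.1]; exact ht.2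
    have hs := hδs hd ht.1
    rw [slope_def_field, h0, sub_zero, sub_zero] at hs
    by_contra hge
    push_neg at hge
    exact absurd (div_nonneg hge ht.1.le) (not_le.2 hs)
  have hanti : StrictAntiOn g (Icc 0 (δ/2)) := by
    apply strictAntiOn_of_deriv_neg (convex_Icc _ _)
    · exact (continuous_iff_continuousAt.2
        fun t => (hg t).differentiableAt.continuousAt).continuousOn
    · intro t ht
      rw [interior_Icc] at ht
      rw [(hg t).deriv]
      exact hneg t ⟨ht.1, ht.2.trans_le (by linarith)⟩
  have : g (δ/2) < g 0 :=
    hanti (left_mem_Icc.2 (by linarith)) ⟨by linarith, le_refl _⟩ (by linarith)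
  exact absurd (hmin (δ/2)) (not_le.2 this)

/-- At a global minimum of a `C²` function, every directional second derivative is nonnegative. -/
lemma dir_second_deriv_nonneg {E : Type*} [NormedAddCommGroup E] [NormedSpace ℝ E]
    {u : E → ℝ} (hu2 : ContDiff ℝ 2 u) {x₀ : E} (hmin : ∀ y, u x₀ ≤ u y) (v : E) :
    0 ≤ fderiv ℝ (fun y => fderiv ℝ u y v) x₀ v := by
  have hud : Differentiable ℝ u := hu2.differentiable (by norm_num)
  have hF : Differentiable ℝ (fderiv ℝ u) :=
    (hu2.fderiv_right (m := 1) (by norm_num)).differentiable (by norm_num)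
  have hc : ∀ t : ℝ, HasDerivAt (fun t : ℝ => x₀ + t • v) v t := by
    intro t
    simpa using (((hasDerivAt_id t).smul_const v).const_add x₀)
  set g' : ℝ → ℝ := fun t => fderiv ℝ u (x₀ + t • v) v with hg'def
  have hg : ∀ t, HasDerivAt (fun t : ℝ => u (x₀ + t • v)) (g' t) t := fun t =>
    (hud (x₀ + t • v)).hasFDerivAt.comp_hasDerivAt t (hc t)
  set ev : (E →L[ℝ] ℝ) →L[ℝ] ℝ := ContinuousLinearMap.apply ℝ ℝ v with hevdef
  have h1 : HasFDerivAt (fun y => fderiv ℝ u y v) (ev.comp (fderiv ℝ (fderiv ℝ u) x₀)) x₀ :=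
    ev.hasFDerivAt.comp x₀ (hF x₀).hasFDerivAt
  have h1' : HasFDerivAt (fun y => fderiv ℝ u y v)
      (ev.comp (fderiv ℝ (fderiv ℝ u) (x₀ + (0:ℝ) • v))) (x₀ + (0:ℝ) • v) := by
    simpa using h1
  have hg'' : HasDerivAt g' ((fderiv ℝ (fderiv ℝ u) x₀ v) v) 0 := by
    have := h1'.comp_hasDerivAt 0 (hc 0)
    simp [ev, ContinuousLinearMap.apply] at this
    exact this
  have hA : 0 ≤ (fderiv ℝ (fderiv ℝ u) x₀ v) v :=
    second_deriv_test hg hg'' (fun t => by simpa using hmin (x₀ + t • v))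
  rw [h1.fderiv]
  simpa [ev, ContinuousLinearMap.apply] using hA

set_option maxHeartbeats 2000000 in
/-- A nontrivial nonnegative classical solution of
`−Δu + (−Δ)ˢu + u = uᵖ` in `ℝⁿ` vanishing at infinity is strictly positive everywhere. -/
theorem classical_solution_positive (n : ℕ) (hn : 2 ≤ n) (s p cns : ℝ)
    (hs : s ∈ Set.Ioo (0 : ℝ) 1) (hp : 1 < p) (hcns : 0 < cns)
    (u : EuclideanSpace ℝ (Fin n) → ℝ) (hu2 : ContDiff ℝ 2 u)
    (Lu : EuclideanSpace ℝ (Fin n) → ℝ)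
    (hLu : ∀ x : EuclideanSpace ℝ (Fin n), IsFracLapAt n s u x (Lu x))
    (heq : ∀ x : EuclideanSpace ℝ (Fin n), -(lapl n u x) + cns * Lu x + u x = u x ^ p)
    (hnonneg : ∀ x : EuclideanSpace ℝ (Fin n), 0 ≤ u x)
    (hnontriv : ∃ x : EuclideanSpace ℝ (Fin n), u x ≠ 0)
    (hdecay : Filter.Tendsto u (Filter.cocompact (EuclideanSpace ℝ (Fin n))) (nhds 0)) :
    ∀ x : EuclideanSpace ℝ (Fin n), 0 < u x := by
  intro x₀
  rcases (hnonneg x₀).lt_or_eq with h | h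
  · exact h
  exfalso
  have hx₀ : u x₀ = 0 := h.symm
  have hL : Filter.Tendsto
      (fun ε : ℝ => ∫ y in {y : EuclideanSpace ℝ (Fin n) | ε ≤ dist x₀ y},
        (u x₀ - u y) / dist x₀ y ^ ((n : ℝ) + 2 * s))
      (nhdsWithin 0 (Set.Ioi 0)) (nhds (Lu x₀)) := hLu x₀
  set α : ℝ := (n : ℝ) + 2 * s with hαdef
  have hnα : (n : ℝ) < α := by simp only [hαdef]; linarith [hs.1]
  have hα0 : (0 : ℝ) < α := (Nat.cast_nonneg n).trans_lt hnα
  set f : EuclideanSpace ℝ (Fin n) → ℝ := fun y => (u x₀ - u y) / dist x₀ y ^ α with hfdef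
  have hfnp : ∀ y, f y ≤ 0 := by
    intro y
    have h1 : u x₀ - u y ≤ 0 := by rw [hx₀]; linarith [hnonneg y]
    exact div_nonpos_iff.2 (Or.inr ⟨h1, Real.rpow_nonneg dist_nonneg α⟩)
  have hmf : Measurable f :=
    (measurable_const.sub hu2.continuous.measurable).div
      ((continuous_const.dist continuous_id).rpow_const fun y => Or.inr hα0.le).measurable
  -- a global bound on u
  obtain ⟨K, hK, hKs⟩ := mem_cocompact.1 (hdecay.eventually (eventually_lt_nhds one_pos))
  obtain ⟨C, hC⟩ := hK.exists_bound_of_continuousOn hu2.continuous.continuousOn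
  set M : ℝ := max C 1 with hMdef
  have hM1 : (1:ℝ) ≤ M := le_max_right _ _
  have hMb : ∀ y, u y ≤ M := by
    intro y
    by_cases hy : y ∈ K
    · exact le_trans (le_trans (le_abs_self _) (hC y hy)) (le_max_left _ _)
    · exact le_trans (le_of_lt (hKs hy)) hM1
  -- integrable majorant
  have hg : Integrable (fun y : EuclideanSpace ℝ (Fin n) => (1 + ‖y - x₀‖) ^ (-α)) := by
    have h0 : Integrable (fun y : EuclideanSpace ℝ (Fin n) => (1 + ‖y‖) ^ (-α)) :=
      integrable_one_add_norm (by rwa [finrank_euclideanSpace_fin])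
    exact h0.comp_sub_right x₀
  -- integrability on the truncated regions
  have hint : ∀ ε : ℝ, 0 < ε → IntegrableOn f {y | ε ≤ dist x₀ y} := by
    intro ε hε
    have hSm : MeasurableSet {y : EuclideanSpace ℝ (Fin n) | ε ≤ dist x₀ y} :=
      (isClosed_le continuous_const (continuous_const.dist continuous_id)).measurableSet
    refine Integrable.mono' ((hg.const_mul (M * (1 + 1/ε) ^ α)).integrableOn)
      hmf.aestronglyMeasurable.restrict ?_
    refine (ae_restrict_iff' hSm).2 (Filter.Eventually.of_forall ?_)
    intro y hy
    have hyd : ε ≤ dist x₀ y := hy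
    have hd0 : 0 < dist x₀ y := lt_of_lt_of_le hε hyd
    have hdn : ‖y - x₀‖ = dist x₀ y := (dist_eq_norm' x₀ y).symm
    have hdα : 0 < dist x₀ y ^ α := Real.rpow_pos_of_pos hd0 α
    have h1d : 0 < 1 + dist x₀ y := by linarith
    have h1dα : 0 < (1 + dist x₀ y) ^ α := Real.rpow_pos_of_pos h1d α
    have hle : 1 + dist x₀ y ≤ (1 + 1/ε) * dist x₀ y := by
      have h2 : 1 ≤ dist x₀ y / ε := (one_le_div hε).2 hyd
      have h3 : dist x₀ y / ε = (1/ε) * dist x₀ y := by ring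
      nlinarith
    have hkey : (1 + dist x₀ y) ^ α ≤ (1 + 1/ε) ^ α * dist x₀ y ^ α := by
      rw [← Real.mul_rpow (by positivity) hd0.le]
      exact Real.rpow_le_rpow h1d.le hle hα0.le
    have hnorm : ‖f y‖ = u y / dist x₀ y ^ α := by
      simp only [hfdef, hx₀, zero_sub, Real.norm_eq_abs, abs_div, abs_neg,
        abs_of_nonneg (hnonneg y), abs_of_nonneg hdα.le]
    rw [hnorm, hdn, Real.rpow_neg h1d.le, ← div_eq_mul_inv, div_le_div_iff₀ hdα h1dα]
    nlinarith [mul_le_mul_of_nonneg_left hkey (by linarith : (0:ℝ) ≤ M),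
      mul_le_mul_of_nonneg_right (hMb y) h1dα.le]
  -- a point where u is positive, and a ball around it
  obtain ⟨x₁, hx₁⟩ := hnontriv
  have hx₁pos : 0 < u x₁ := (hnonneg x₁).lt_of_ne (Ne.symm hx₁)
  have hx₁ne : x₁ ≠ x₀ := fun hcon => by rw [hcon, hx₀] at hx₁pos; exact lt_irrefl 0 hx₁pos
  set r₀ := dist x₀ x₁ with hr₀def
  have hr₀ : 0 < r₀ := dist_pos.2 (Ne.symm hx₁ne)
  obtain ⟨ε₁, hε₁, hball⟩ := Metric.eventually_nhds_iff.1
    ((hu2.continuous.tendsto x₁).eventually (eventually_gt_nhds (half_lt_self hx₁pos)))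
  set δ := min (ε₁/2) (r₀/2) with hδdef
  have hδpos : 0 < δ := lt_min (by linarith) (by linarith)
  have hδr : δ ≤ r₀/2 := min_le_right _ _
  set B := Metric.ball x₁ δ with hBdef
  set ε₀ := r₀/2 with hε₀def
  have hε₀pos : 0 < ε₀ := by positivity
  have hBS : B ⊆ {y | ε₀ ≤ dist x₀ y} := by
    intro y hy
    have h1 : dist y x₁ < δ := hy
    have h2 : r₀ ≤ dist x₀ y + dist y x₁ := dist_triangle x₀ y x₁
    show ε₀ ≤ dist x₀ y
    simp only [hε₀def]; linarith
  have hBR : ∀ y ∈ B, dist x₀ y ≤ 2 * r₀ := by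
    intro y hy
    have h1 : dist y x₁ < δ := hy
    have h2 : dist x₀ y ≤ dist x₀ x₁ + dist x₁ y := dist_triangle x₀ x₁ y
    rw [dist_comm x₁ y] at h2
    linarith
  have hBu : ∀ y ∈ B, u x₁ / 2 < u y := fun y hy =>
    hball (lt_of_lt_of_le hy ((min_le_left _ _).trans (by linarith)))
  set m := u x₁ / 2 with hmdef
  have hmpos : 0 < m := by positivity
  set R := 2 * r₀ with hRdef
  have hRα : 0 < R ^ α := Real.rpow_pos_of_pos (by positivity) α
  have hfB : ∀ y ∈ B, f y ≤ -(m / R ^ α) := by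
    intro y hy
    have hd0 : 0 < dist x₀ y := lt_of_lt_of_le hε₀pos (hBS hy)
    have hdα : 0 < dist x₀ y ^ α := Real.rpow_pos_of_pos hd0 α
    have hRle : dist x₀ y ^ α ≤ R ^ α := Real.rpow_le_rpow hd0.le (hBR y hy) hα0.le
    have h1 : m / R ^ α ≤ u y / dist x₀ y ^ α :=
      div_le_div₀ (hnonneg y) (le_of_lt (hBu y hy)) hdα hRle
    have h2 : f y = -(u y / dist x₀ y ^ α) := by
      simp only [hfdef, hx₀, zero_sub, neg_div]
    rw [h2]
    linarith
  -- the limit candidate: integral over the fixed region is negative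
  set c := ∫ y in {y : EuclideanSpace ℝ (Fin n) | ε₀ ≤ dist x₀ y}, f y with hcdef
  have hfiB : IntegrableOn f B := (hint ε₀ hε₀pos).mono_set hBS
  have hvolB : volume B ≠ ⊤ := measure_ball_lt_top.ne
  have hcB : (∫ y in B, f y) ≤ -(m / R ^ α) * (volume B).toReal := by
    have h1 : (∫ y in B, f y) ≤ ∫ _ in B, -(m / R ^ α) :=
      setIntegral_mono_on hfiB (integrableOn_const measure_ball_lt_top.ne)
        measurableSet_ball hfB
    rw [setIntegral_const, smul_eq_mul] at h1
    rw [Measure.real_def] at h1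
    linarith [h1, mul_comm ((volume B).toReal) (-(m / R ^ α))]
  have hcleB : c ≤ ∫ y in B, f y := by
    have h := setIntegral_mono_set (μ := volume) (hint ε₀ hε₀pos).neg
      (Filter.Eventually.of_forall fun y => neg_nonneg.2 (hfnp y))
      (HasSubset.Subset.eventuallyLE hBS)
    simp only [Pi.neg_apply, integral_neg] at h
    linarith
  have hcneg : c < 0 := by
    have hvol : 0 < (volume B).toReal :=
      ENNReal.toReal_pos (Metric.measure_ball_pos volume x₁ hδpos).ne' hvolB
    have hm2 : 0 < m / R ^ α := by positivity
    nlinarith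
  -- eventual bound on the truncated integrals
  have hev : ∀ᶠ ε in 𝓝[>] (0:ℝ),
      (∫ y in {y : EuclideanSpace ℝ (Fin n) | ε ≤ dist x₀ y}, f y) ≤ c := by
    filter_upwards [eventually_mem_nhdsWithin,
      eventually_nhdsWithin_of_eventually_nhds (eventually_lt_nhds hε₀pos)] with ε hε1 hε2
    have hsub : {y : EuclideanSpace ℝ (Fin n) | ε₀ ≤ dist x₀ y} ⊆ {y | ε ≤ dist x₀ y} :=
      fun y hy => le_trans (le_of_lt hε2) hy
    have h := setIntegral_mono_set (μ := volume) (hint ε hε1).neg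
      (Filter.Eventually.of_forall fun y => neg_nonneg.2 (hfnp y))
      (HasSubset.Subset.eventuallyLE hsub)
    simp only [Pi.neg_apply, integral_neg] at h
    linarith
  have hLule : Lu x₀ ≤ c := le_of_tendsto hL hev
  -- the Laplacian is nonnegative at the minimum
  have hmin : ∀ y, u x₀ ≤ u y := fun y => by rw [hx₀]; exact hnonneg y
  have hlapl : 0 ≤ lapl n u x₀ :=
    Finset.sum_nonneg fun i _ => dir_second_deriv_nonneg hu2 hmin _
  -- contradiction with the equation
  have hequ := heq x₀
  rw [hx₀, Real.zero_rpow (by linarith : p ≠ 0)] at hequ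
  nlinarith [mul_pos hcns (neg_pos.2 (lt_of_le_of_lt hLule hcneg))]
end
end

section
/- If f, g ∈ L¹(ℝⁿ) are radially symmetric, nonnegative, and nonincreasing in r = |x|, then the convolution f ∗ g is radially symmetric and nonincreasing in r. -/
open MeasureTheory Filter Set
open scoped Topology ENNReal






-- 1D interval length inequality
lemma aux_interval (L M a b : ℝ) (ha : 0 ≤ a) (hab : a ≤ b) :
    min (b + L) M - max (b - L) (-M) ≤ min (a + L) M - max (a - L) (-M) := by
  rcases le_total (b + L) M with h1 | h1 <;>
  rcases le_total (a + L) M with h2 | h2 <;>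
  rcases le_total (b - L) (-M) with h3 | h3 <;>
  rcases le_total (a - L) (-M) with h4 | h4 <;>
  simp [min_def, max_def] <;> split_ifs <;> linarith

-- 1D volume inequality
lemma aux_vol1d (A B a b : ℝ) (ha : 0 ≤ a) (hab : a ≤ b) :
    volume {t : ℝ | (t - b) ^ 2 < A ∧ t ^ 2 < B} ≤
      volume {t : ℝ | (t - a) ^ 2 < A ∧ t ^ 2 < B} := by
  rcases le_or_gt A 0 with hA | hA
  · have : {t : ℝ | (t - b) ^ 2 < A ∧ t ^ 2 < B} = ∅ := by
      ext t; simp only [mem_setOf_eq, mem_empty_iff_false, iff_false, not_and]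
      intro h; exact absurd (lt_of_le_of_lt (sq_nonneg _) h) (not_lt.2 hA)
    simp [this]
  rcases le_or_gt B 0 with hB | hB
  · have : {t : ℝ | (t - b) ^ 2 < A ∧ t ^ 2 < B} = ∅ := by
      ext t; simp only [mem_setOf_eq, mem_empty_iff_false, iff_false, not_and]
      intro _; exact fun h => absurd (lt_of_le_of_lt (sq_nonneg _) h) (not_lt.2 hB)
    simp [this]
  have key : ∀ c : ℝ, {t : ℝ | (t - c) ^ 2 < A ∧ t ^ 2 < B} =
      Ioo (max (c - Real.sqrt A) (-Real.sqrt B)) (min (c + Real.sqrt A) (Real.sqrt B)) := by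
    intro c
    rw [← Set.Ioo_inter_Ioo]
    ext t
    have h1 : (t - c) ^ 2 < A ↔ |t - c| < Real.sqrt A := by
      rw [← sq_abs]; exact (Real.lt_sqrt (abs_nonneg _)).symm
    have h2 : t ^ 2 < B ↔ |t| < Real.sqrt B := by
      rw [← sq_abs]; exact (Real.lt_sqrt (abs_nonneg _)).symm
    simp only [mem_setOf_eq, mem_inter_iff, mem_Ioo, h1, h2, abs_lt]
    constructor
    · rintro ⟨⟨u1, u2⟩, v1, v2⟩; exact ⟨⟨by linarith, by linarith⟩, v1, v2⟩
    · rintro ⟨⟨u1, u2⟩, v1, v2⟩; exact ⟨⟨by linarith, by linarith⟩, v1, v2⟩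
  rw [key a, key b, Real.volume_Ioo, Real.volume_Ioo]
  exact ENNReal.ofReal_le_ofReal (by
    have := aux_interval (Real.sqrt A) (Real.sqrt B) a b ha hab
    simpa [sub_eq_add_neg] using this)





lemma aux_coord (m : ℕ) (t c r : ℝ) (hr : 0 < r) (w : Fin m → ℝ)
    (v : EuclideanSpace ℝ (Fin (m+1))) (hv : ∀ i, v i = Fin.cases t w i) :
    (‖v - c • EuclideanSpace.single (0 : Fin (m+1)) (1:ℝ)‖ < r ↔
      (t - c) ^ 2 + (∑ j, w j ^ 2) < r ^ 2) := by
  rw [EuclideanSpace.norm_eq, Real.sqrt_lt' hr]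
  have : ∀ i, ‖(v - c • EuclideanSpace.single (0 : Fin (m+1)) (1:ℝ)) i‖ ^ 2
      = (Fin.cases t w i - Fin.cases c (fun _ => (0:ℝ)) i) ^ 2 := by
    intro i
    have : (v - c • EuclideanSpace.single (0 : Fin (m+1)) (1:ℝ)) i
        = v i - c * (EuclideanSpace.single (0 : Fin (m+1)) (1:ℝ)) i := by
      simp [PiLp.sub_apply, PiLp.smul_apply]
    rw [this, hv i]
    rw [Real.norm_eq_abs, sq_abs]
    congr 1
    induction i using Fin.cases <;> simp [EuclideanSpace.single_apply, Fin.succ_ne_zero]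
  rw [Finset.sum_congr rfl fun i _ => this i, Fin.sum_univ_succ]
  simp only [Fin.cases_zero, Fin.cases_succ, sub_zero]

lemma aux_slice (m : ℕ) (r s c : ℝ) (hr : 0 < r) (hs : 0 < s) :
    volume (Metric.ball (c • EuclideanSpace.single (0 : Fin (m+1)) (1:ℝ)) r ∩
        Metric.ball (0 : EuclideanSpace ℝ (Fin (m+1))) s) =
      ∫⁻ w : Fin m → ℝ, volume {t : ℝ |
        (t - c) ^ 2 + (∑ j, w j ^ 2) < r ^ 2 ∧ t ^ 2 + (∑ j, w j ^ 2) < s ^ 2} := by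
  classical
  set e : EuclideanSpace ℝ (Fin (m+1)) := EuclideanSpace.single (0 : Fin (m+1)) (1:ℝ) with he
  set S : Set (EuclideanSpace ℝ (Fin (m+1))) :=
    Metric.ball (c • e) r ∩ Metric.ball 0 s with hS
  have hSm : MeasurableSet S :=
    (Metric.isOpen_ball.inter Metric.isOpen_ball).measurableSet
  set eqv := (MeasurableEquiv.toLp 2 (Fin (m+1) → ℝ)).symm with heqv
  have h1 : volume (eqv.symm ⁻¹' S) = volume S :=
    (EuclideanSpace.volume_preserving_symm_measurableEquiv_toLp (Fin (m+1))).symm _ |>.measure_preimage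
      hSm.nullMeasurableSet
  set P := MeasurableEquiv.piFinSuccAbove (fun _ : Fin (m+1) => ℝ) 0 with hP
  have h2 : volume (P.symm ⁻¹' (eqv.symm ⁻¹' S)) = volume (eqv.symm ⁻¹' S) :=
    (volume_preserving_piFinSuccAbove (fun _ : Fin (m+1) => ℝ) 0).symm _ |>.measure_preimage
      (eqv.symm.measurable hSm).nullMeasurableSet
  rw [← h1, ← h2]
  rw [MeasureTheory.Measure.volume_eq_prod, Measure.prod_apply_symm
    (P.symm.measurable (eqv.symm.measurable hSm))]
  congr 1
  funext w
  congr 1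
  ext t
  have hv : ∀ i, (eqv.symm (P.symm (t, w))) i = Fin.cases t w i := by
    intro i
    simp [heqv, hP, MeasurableEquiv.piFinSuccAbove]
    induction i using Fin.cases <;> simp
  have hb1 := aux_coord m t c r hr w _ hv
  have hb2 := aux_coord m t 0 s hs w _ hv
  simp only [zero_smul, sub_zero] at hb2
  simp only [mem_preimage, hS, mem_inter_iff, Metric.mem_ball, dist_eq_norm, sub_zero,
    mem_setOf_eq, he]
  rw [hb1, hb2]

lemma aux_ball_axis (m : ℕ) (r s a b : ℝ) (ha : 0 ≤ a) (hab : a ≤ b) :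
    volume (Metric.ball (b • EuclideanSpace.single (0 : Fin (m+1)) (1:ℝ)) r ∩
        Metric.ball (0 : EuclideanSpace ℝ (Fin (m+1))) s) ≤
      volume (Metric.ball (a • EuclideanSpace.single (0 : Fin (m+1)) (1:ℝ)) r ∩
        Metric.ball (0 : EuclideanSpace ℝ (Fin (m+1))) s) := by
  rcases le_or_gt r 0 with hr | hr
  · simp [Metric.ball_eq_empty.2 hr]
  rcases le_or_gt s 0 with hs | hs
  · simp [Metric.ball_eq_empty.2 hs]
  rw [aux_slice m r s a hr hs, aux_slice m r s b hr hs]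
  refine lintegral_mono fun w => ?_
  have h1 : ∀ c : ℝ, {t : ℝ | (t - c) ^ 2 + (∑ j, w j ^ 2) < r ^ 2
      ∧ t ^ 2 + (∑ j, w j ^ 2) < s ^ 2}
      = {t : ℝ | (t - c) ^ 2 < r ^ 2 - (∑ j, w j ^ 2) ∧ t ^ 2 < s ^ 2 - (∑ j, w j ^ 2)} := by
    intro c; ext t; simp only [mem_setOf_eq]
    constructor <;> rintro ⟨u1, u2⟩ <;> exact ⟨by linarith, by linarith⟩
  rw [h1 a, h1 b]
  exact aux_vol1d _ _ a b ha hab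


lemma aux_ball (m : ℕ) (r s : ℝ) (x y : EuclideanSpace ℝ (Fin (m+1))) (hxy : ‖x‖ ≤ ‖y‖) :
    volume (Metric.ball y r ∩ Metric.ball 0 s) ≤
      volume (Metric.ball x r ∩ Metric.ball 0 s) := by
  have key : ∀ x : EuclideanSpace ℝ (Fin (m+1)),
      volume (Metric.ball x r ∩ Metric.ball 0 s) =
      volume (Metric.ball (‖x‖ • EuclideanSpace.single (0 : Fin (m+1)) (1:ℝ)) r ∩
        Metric.ball 0 s) := by
    intro x
    set e : EuclideanSpace ℝ (Fin (m+1)) := EuclideanSpace.single (0 : Fin (m+1)) (1:ℝ) with he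
    have hnorm : ‖x‖ = ‖‖x‖ • e‖ := by
      rw [norm_smul, he, EuclideanSpace.norm_single]
      simp [abs_of_nonneg (norm_nonneg x)]
    set T := Submodule.reflection (ℝ ∙ (x - ‖x‖ • e))ᗮ with hT
    have hTx : T x = ‖x‖ • e := Submodule.reflection_sub hnorm
    have hMP : MeasurePreserving T volume volume := T.measurePreserving
    have hpre : T ⁻¹' (Metric.ball (‖x‖ • e) r ∩ Metric.ball 0 s)
        = Metric.ball x r ∩ Metric.ball 0 s := by
      ext z
      simp only [preimage_inter, mem_inter_iff, mem_preimage, Metric.mem_ball]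
      rw [← hTx, ← map_zero T, T.dist_map, T.dist_map, map_zero]
    rw [← hpre, hMP.measure_preimage
      ((Metric.isOpen_ball.inter Metric.isOpen_ball).measurableSet).nullMeasurableSet]
  rw [key x, key y]
  exact aux_ball_axis m r s ‖x‖ ‖y‖ (norm_nonneg x) hxy


lemma aux_sets (m : ℕ) (A B : Set (EuclideanSpace ℝ (Fin (m+1))))
    (hAd : ∀ w w', ‖w'‖ ≤ ‖w‖ → w ∈ A → w' ∈ A)
    (hBd : ∀ w w', ‖w'‖ ≤ ‖w‖ → w ∈ B → w' ∈ B)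
    (x y : EuclideanSpace ℝ (Fin (m+1))) (hxy : ‖x‖ ≤ ‖y‖) :
    volume ((fun w => y + w) '' A ∩ B) ≤ volume ((fun w => x + w) '' A ∩ B) := by
  classical
  rcases eq_empty_or_nonempty A with rfl | hAne
  · simp
  rcases eq_empty_or_nonempty B with rfl | hBne
  · simp
  have himg : ∀ c : EuclideanSpace ℝ (Fin (m+1)), (fun w => c + w) '' univ = univ := by
    intro c; apply eq_univ_of_forall; intro v; exact ⟨v - c, trivial, add_sub_cancel c v⟩
  by_cases hAb : ∃ C, ∀ w ∈ A, ‖w‖ ≤ C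
  swap
  · have hA : A = univ := by
      push_neg at hAb
      apply eq_univ_of_forall; intro v
      obtain ⟨w, hw, hw2⟩ := hAb ‖v‖
      exact hAd w v hw2.le hw
    rw [hA, himg, himg]
  by_cases hBb : ∃ C, ∀ w ∈ B, ‖w‖ ≤ C
  swap
  · have hB : B = univ := by
      push_neg at hBb
      apply eq_univ_of_forall; intro v
      obtain ⟨w, hw, hw2⟩ := hBb ‖v‖
      exact hBd w v hw2.le hw
    rw [hB, inter_univ, inter_univ]
    have htr : ∀ c : EuclideanSpace ℝ (Fin (m+1)),
        volume ((fun w => c + w) '' A) = volume A := by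
      intro c
      rw [Set.image_add_left, measure_preimage_add]
    rw [htr, htr]
  obtain ⟨CA, hCA⟩ := hAb
  obtain ⟨CB, hCB⟩ := hBb
  set RA := sSup (norm '' A) with hRA
  set RB := sSup (norm '' B) with hRB
  have bddA : BddAbove (norm '' A) := ⟨CA, by rintro _ ⟨w, hw, rfl⟩; exact hCA w hw⟩
  have bddB : BddAbove (norm '' B) := ⟨CB, by rintro _ ⟨w, hw, rfl⟩; exact hCB w hw⟩
  have hA1 : Metric.ball (0 : EuclideanSpace ℝ (Fin (m+1))) RA ⊆ A := by
    intro v hv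
    rw [mem_ball_zero_iff] at hv
    obtain ⟨_, ⟨w, hw, rfl⟩, hlt⟩ := exists_lt_of_lt_csSup (hAne.image _) hv
    exact hAd w v hlt.le hw
  have hB1 : Metric.ball (0 : EuclideanSpace ℝ (Fin (m+1))) RB ⊆ B := by
    intro v hv
    rw [mem_ball_zero_iff] at hv
    obtain ⟨_, ⟨w, hw, rfl⟩, hlt⟩ := exists_lt_of_lt_csSup (hBne.image _) hv
    exact hBd w v hlt.le hw
  have hA2 : ∀ w ∈ A, ‖w‖ ≤ RA := fun w hw => le_csSup bddA ⟨w, hw, rfl⟩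
  have hB2 : ∀ w ∈ B, ‖w‖ ≤ RB := fun w hw => le_csSup bddB ⟨w, hw, rfl⟩
  have key : ∀ c : EuclideanSpace ℝ (Fin (m+1)),
      volume ((fun w => c + w) '' A ∩ B) = volume (Metric.ball c RA ∩ Metric.ball (0 : EuclideanSpace ℝ (Fin (m+1))) RB) := by
    intro c
    apply le_antisymm
    · have hsub : (fun w => c + w) '' A ∩ B ⊆
          (Metric.ball c RA ∩ Metric.ball (0 : EuclideanSpace ℝ (Fin (m+1))) RB) ∪ (Metric.sphere c RA ∪ Metric.sphere (0 : EuclideanSpace ℝ (Fin (m+1))) RB) := by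
        rintro z ⟨⟨w, hw, rfl⟩, hzB⟩
        have h1 : dist (c + w) c ≤ RA := by
          rw [dist_eq_norm, add_sub_cancel_left]; exact hA2 w hw
        have h2 : dist (c + w) (0 : EuclideanSpace ℝ (Fin (m+1))) ≤ RB := by
          rw [dist_zero_right]; exact hB2 _ hzB
        rcases lt_or_eq_of_le h1 with h1 | h1
        · rcases lt_or_eq_of_le h2 with h2 | h2
          · exact Or.inl ⟨h1, h2⟩
          · exact Or.inr (Or.inr h2)
        · exact Or.inr (Or.inl h1)
      calc volume ((fun w => c + w) '' A ∩ B) ≤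
          volume ((Metric.ball c RA ∩ Metric.ball (0 : EuclideanSpace ℝ (Fin (m+1))) RB) ∪
            (Metric.sphere c RA ∪ Metric.sphere (0 : EuclideanSpace ℝ (Fin (m+1))) RB)) := measure_mono hsub
        _ ≤ volume (Metric.ball c RA ∩ Metric.ball (0 : EuclideanSpace ℝ (Fin (m+1))) RB) +
            volume (Metric.sphere c RA ∪ Metric.sphere (0 : EuclideanSpace ℝ (Fin (m+1))) RB) :=
              measure_union_le (μ := volume) _ _
        _ ≤ volume (Metric.ball c RA ∩ Metric.ball (0 : EuclideanSpace ℝ (Fin (m+1))) RB) +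
            (volume (Metric.sphere c RA) + volume (Metric.sphere (0 : EuclideanSpace ℝ (Fin (m+1))) RB)) := by
              gcongr
              exact measure_union_le (μ := volume) _ _
        _ = volume (Metric.ball c RA ∩ Metric.ball (0 : EuclideanSpace ℝ (Fin (m+1))) RB) := by
              simp [Measure.addHaar_sphere]
    · apply measure_mono
      rintro z ⟨hz1, hz2⟩
      refine ⟨⟨z - c, hA1 ?_, add_sub_cancel c z⟩, hB1 hz2⟩
      rw [mem_ball_zero_iff, ← dist_eq_norm]
      exact hz1
  rw [key x, key y]
  exact aux_ball m RA RB x y hxy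


lemma aux_meas (m : ℕ) (f : EuclideanSpace ℝ (Fin (m+1)) → ℝ)
    (hmono : ∀ x y : EuclideanSpace ℝ (Fin (m+1)), ‖x‖ ≤ ‖y‖ → f y ≤ f x) :
    Measurable f := by
  set e : EuclideanSpace ℝ (Fin (m+1)) := EuclideanSpace.single (0 : Fin (m+1)) (1:ℝ) with he
  have hne : ∀ t : ℝ, 0 ≤ t → ‖t • e‖ = t := by
    intro t ht
    rw [norm_smul, he, EuclideanSpace.norm_single]
    simp [abs_of_nonneg ht]
  have hfe : ∀ z, f z = f (‖z‖ • e) := by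
    intro z
    have h := hne ‖z‖ (norm_nonneg z)
    exact le_antisymm (hmono _ z h.le) (hmono z _ h.ge)
  have hanti : Antitone fun t : ℝ => f (max t 0 • e) := by
    intro t1 t2 h
    refine hmono _ _ ?_
    rw [hne _ (le_max_right t1 0), hne _ (le_max_right t2 0)]
    exact max_le_max h le_rfl
  have : f = (fun t : ℝ => f (max t 0 • e)) ∘ fun z => ‖z‖ := by
    funext z
    simp only [Function.comp_apply, max_eq_left (norm_nonneg z)]
    exact hfe z
  rw [this]
  exact hanti.measurable.comp measurable_norm


/-- If `f, g ∈ L¹(ℝⁿ)` are radially symmetric, nonnegative and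
nonincreasing in `r = |x|`, then so is the convolution `f ∗ g`. (Radial symmetry together
with monotonicity in the radius is encoded as: `‖x‖ ≤ ‖y‖` implies the value at `y` is at
most the value at `x`.) -/
theorem radial_decreasing_convolution (n : ℕ) (hn : 1 ≤ n)
    (f g : EuclideanSpace ℝ (Fin n) → ℝ)
    (hf1 : Integrable f (volume : Measure (EuclideanSpace ℝ (Fin n))))
    (hg1 : Integrable g (volume : Measure (EuclideanSpace ℝ (Fin n))))
    (hf0 : ∀ x, 0 ≤ f x) (hg0 : ∀ x, 0 ≤ g x)
    (hfmono : ∀ x y : EuclideanSpace ℝ (Fin n), ‖x‖ ≤ ‖y‖ → f y ≤ f x)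
    (hgmono : ∀ x y : EuclideanSpace ℝ (Fin n), ‖x‖ ≤ ‖y‖ → g y ≤ g x) :
    ∀ x y : EuclideanSpace ℝ (Fin n), ‖x‖ ≤ ‖y‖ →
      (∫ z : EuclideanSpace ℝ (Fin n), f (y - z) * g z) ≤
        ∫ z : EuclideanSpace ℝ (Fin n), f (x - z) * g z := by
  obtain ⟨m, rfl⟩ : ∃ m, n = m + 1 := ⟨n - 1, (Nat.succ_pred_eq_of_pos hn).symm⟩
  intro x y hxy
  have hfm : Measurable f := aux_meas m f hfmono
  have hgm : Measurable g := aux_meas m g hgmono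
  have hmeasc : ∀ c : EuclideanSpace ℝ (Fin (m+1)),
      Measurable fun z => ENNReal.ofReal (f (c - z)) * ENNReal.ofReal (g z) := fun c =>
    ((ENNReal.measurable_ofReal.comp (hfm.comp (measurable_const.sub measurable_id))).mul
      (ENNReal.measurable_ofReal.comp hgm))
  have hconv : ∀ c : EuclideanSpace ℝ (Fin (m+1)), (∫ z, f (c - z) * g z) =
      (∫⁻ z, ENNReal.ofReal (f (c - z)) * ENNReal.ofReal (g z)).toReal := by
    intro c
    have hsm : AEStronglyMeasurable (fun z => f (c - z) * g z)
        (volume : Measure (EuclideanSpace ℝ (Fin (m+1)))) := by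
      apply Measurable.aestronglyMeasurable
      exact (hfm.comp (by fun_prop)).mul hgm
    rw [MeasureTheory.integral_eq_lintegral_of_nonneg_ae
      (ae_of_all _ fun z => mul_nonneg (hf0 _) (hg0 _)) hsm]
    congr 1
    exact lintegral_congr fun z => ENNReal.ofReal_mul (hf0 _)
  have hfin : (∫⁻ z, ENNReal.ofReal (f (x - z)) * ENNReal.ofReal (g z)) ≠ ∞ := by
    have hb : ∀ z, ENNReal.ofReal (f (x - z)) * ENNReal.ofReal (g z) ≤
        ENNReal.ofReal (f 0) * ENNReal.ofReal (g z) := fun z =>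
      mul_le_mul_left (ENNReal.ofReal_le_ofReal (hfmono 0 _ (by simp))) _
    refine ne_of_lt (lt_of_le_of_lt (lintegral_mono hb) ?_)
    rw [lintegral_const_mul _ hgm.ennreal_ofReal]
    exact ENNReal.mul_lt_top ENNReal.ofReal_lt_top hg1.lintegral_lt_top
  rw [hconv x, hconv y]
  refine ENNReal.toReal_mono hfin ?_
  -- triple layer cake
  set W : EuclideanSpace ℝ (Fin (m+1)) → EuclideanSpace ℝ (Fin (m+1)) → ℝ × ℝ → ℝ≥0∞ :=
    fun c z p => Set.indicator
      {q : EuclideanSpace ℝ (Fin (m+1)) × ℝ × ℝ |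
        (0 < q.2.1 ∧ q.2.1 < f (c - q.1)) ∧ (0 < q.2.2 ∧ q.2.2 < g q.1)} 1 (z, p) with hW
  have hWsetmeas : ∀ c : EuclideanSpace ℝ (Fin (m+1)), MeasurableSet
      {q : EuclideanSpace ℝ (Fin (m+1)) × ℝ × ℝ |
        (0 < q.2.1 ∧ q.2.1 < f (c - q.1)) ∧ (0 < q.2.2 ∧ q.2.2 < g q.1)} := by
    intro c
    apply MeasurableSet.inter
    · exact (measurableSet_lt measurable_const measurable_snd.fst).inter
        (measurableSet_lt measurable_snd.fst
          (hfm.comp (measurable_const.sub measurable_fst)))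
    · exact (measurableSet_lt measurable_const measurable_snd.snd).inter
        (measurableSet_lt measurable_snd.snd (hgm.comp measurable_fst))
  have hW1 : ∀ (c z : EuclideanSpace ℝ (Fin (m+1))), (∫⁻ p : ℝ × ℝ, W c z p) =
      ENNReal.ofReal (f (c - z)) * ENNReal.ofReal (g z) := by
    intro c z
    have heq : (fun p : ℝ × ℝ => W c z p) =
        Set.indicator (Ioo (0:ℝ) (f (c - z)) ×ˢ Ioo (0:ℝ) (g z)) 1 := by
      funext p
      simp only [hW, Set.indicator_apply, mem_setOf_eq, mem_prod, mem_Ioo, Pi.one_apply]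
    rw [heq, lintegral_indicator_one (measurableSet_Ioo.prod measurableSet_Ioo),
      MeasureTheory.Measure.volume_eq_prod, Measure.prod_prod, Real.volume_Ioo,
      Real.volume_Ioo, sub_zero, sub_zero]
  have hW2 : ∀ (c : EuclideanSpace ℝ (Fin (m+1))) (p : ℝ × ℝ), (∫⁻ z, W c z p) =
      volume {z : EuclideanSpace ℝ (Fin (m+1)) |
        (0 < p.1 ∧ p.1 < f (c - z)) ∧ (0 < p.2 ∧ p.2 < g z)} := by
    intro c p
    have heq : (fun z => W c z p) = Set.indicator
        {z : EuclideanSpace ℝ (Fin (m+1)) |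
          (0 < p.1 ∧ p.1 < f (c - z)) ∧ (0 < p.2 ∧ p.2 < g z)} 1 := by
      funext z
      simp only [hW, Set.indicator_apply, mem_setOf_eq, Pi.one_apply]
    rw [heq, lintegral_indicator_one]
    exact (hWsetmeas c).preimage (measurable_id.prodMk measurable_const)
  have hkey : ∀ c : EuclideanSpace ℝ (Fin (m+1)),
      (∫⁻ z, ENNReal.ofReal (f (c - z)) * ENNReal.ofReal (g z)) =
      ∫⁻ p : ℝ × ℝ, volume {z : EuclideanSpace ℝ (Fin (m+1)) |
        (0 < p.1 ∧ p.1 < f (c - z)) ∧ (0 < p.2 ∧ p.2 < g z)} := by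
    intro c
    calc (∫⁻ z, ENNReal.ofReal (f (c - z)) * ENNReal.ofReal (g z))
        = ∫⁻ z, ∫⁻ p : ℝ × ℝ, W c z p := lintegral_congr fun z => (hW1 c z).symm
      _ = ∫⁻ p : ℝ × ℝ, ∫⁻ z, W c z p := by
          apply lintegral_lintegral_swap
          exact ((measurable_one.indicator (hWsetmeas c)).comp measurable_id).aemeasurable
      _ = _ := lintegral_congr fun p => hW2 c p
  rw [hkey x, hkey y]
  refine lintegral_mono fun p => ?_
  by_cases h1 : 0 < p.1
  swap
  · have he : ∀ c : EuclideanSpace ℝ (Fin (m+1)), {z : EuclideanSpace ℝ (Fin (m+1)) |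
        (0 < p.1 ∧ p.1 < f (c - z)) ∧ (0 < p.2 ∧ p.2 < g z)} = ∅ := by
      intro c; ext z; simp only [mem_setOf_eq, mem_empty_iff_false, iff_false]
      rintro ⟨⟨h, _⟩, _⟩; exact h1 h
    rw [he x, he y]
  by_cases h2 : 0 < p.2
  swap
  · have he : ∀ c : EuclideanSpace ℝ (Fin (m+1)), {z : EuclideanSpace ℝ (Fin (m+1)) |
        (0 < p.1 ∧ p.1 < f (c - z)) ∧ (0 < p.2 ∧ p.2 < g z)} = ∅ := by
      intro c; ext z; simp only [mem_setOf_eq, mem_empty_iff_false, iff_false]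
      rintro ⟨_, ⟨h, _⟩⟩; exact h2 h
    rw [he x, he y]
  have hsym : ∀ w z : EuclideanSpace ℝ (Fin (m+1)), f (w - z) = f (z - w) := by
    intro w z
    have h := norm_sub_rev w z
    exact le_antisymm (hfmono _ _ h.ge) (hfmono _ _ h.le)
  have hset : ∀ c : EuclideanSpace ℝ (Fin (m+1)), {z : EuclideanSpace ℝ (Fin (m+1)) |
      (0 < p.1 ∧ p.1 < f (c - z)) ∧ (0 < p.2 ∧ p.2 < g z)} =
      (fun w => c + w) '' {w | p.1 < f w} ∩ {w | p.2 < g w} := by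
    intro c
    ext z
    simp only [mem_setOf_eq, mem_inter_iff, mem_image, h1, h2, true_and]
    constructor
    · rintro ⟨hfz, hgz⟩
      exact ⟨⟨z - c, by rwa [← hsym c z] , add_sub_cancel c z⟩, hgz⟩
    · rintro ⟨⟨w, hw, rfl⟩, hgz⟩
      refine ⟨?_, hgz⟩
      rwa [hsym, add_sub_cancel_left]
  rw [hset x, hset y]
  exact aux_sets m _ _
    (fun w w' h hw => lt_of_lt_of_le hw (hfmono w' w h))
    (fun w w' h hw => lt_of_lt_of_le hw (hgmono w' w h)) x y hxy
end
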